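/- Let X be a hereditarily locally connected continuum and π : X → S¹ a monotone continuous surjection such that π⁻¹(x) has empty interior for every x ∈ S¹. Then π is a homeomorphism; in particular X is homeomorphic to the circle. -/

import Mathlib

open Metric Filter Topology Set

section Defs
variable {X Y : Type*}

/-- Factor map (semi-conjugacy): continuous surjection intertwining the dynamics. -/
def IsFactorMap [TopologicalSpace X] [TopologicalSpace Y]
    (f : X → X) (g : Y → Y) (π : X → Y) : Prop :=
  Continuous π ∧ Function.Surjective π ∧ π ∘ f = g ∘ π

/-- Monotone map: the preimage of every point is connected. -/
def MonotoneFibers [TopologicalSpace X] [TopologicalSpace Y] (π : X → Y) : Prop :=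
  ∀ y : Y, IsConnected (π ⁻¹' {y})

/-- Minimal map: continuous, and no proper nonempty closed invariant subset. -/
def MinimalMap [TopologicalSpace X] (f : X → X) : Prop :=
  Continuous f ∧ ∀ M : Set X, IsClosed M → M.Nonempty → MapsTo f M M → M = univ

/-- Topological transitivity. -/
def TransitiveMap [TopologicalSpace X] (f : X → X) : Prop :=
  ∀ U V : Set X, IsOpen U → IsOpen V → U.Nonempty → V.Nonempty →
    ∃ n : ℕ, ((f^[n]) '' U ∩ V).Nonempty

/-- Weak mixing: the product system is transitive. -/
def WeaklyMixing [TopologicalSpace X] (f : X → X) : Prop :=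
  TransitiveMap (fun p : X × X => (f p.1, f p.2))

/-- Regionally proximal pairs. -/
def RPplus [MetricSpace X] (f : X → X) (x y : X) : Prop :=
  ∀ ε > (0 : ℝ), ∀ Ox Oy : Set X, IsOpen Ox → IsOpen Oy → x ∈ Ox → y ∈ Oy →
    ∃ x' ∈ Ox, ∃ y' ∈ Oy, ∃ n : ℕ, dist (f^[n] x') (f^[n] y') < ε

/-- Negatively regionally proximal pairs. -/
def RPminus [MetricSpace X] (f : X → X) (x y : X) : Prop :=
  ∃ (xs ys : ℕ → X) (m : ℕ → ℕ),
    Tendsto m atTop atTop ∧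
    Tendsto (fun n => dist (xs n) (ys n)) atTop (𝓝 0) ∧
    Tendsto (fun n => f^[m n] (xs n)) atTop (𝓝 x) ∧
    Tendsto (fun n => f^[m n] (ys n)) atTop (𝓝 y)

/-- `x` and `y` are identified by the maximal equicontinuous factor, i.e.
they are identified by every equicontinuous factor of `(X, f)`. -/
def SeqRel [MetricSpace X] (f : X → X) (x y : X) : Prop :=
  ∀ (Y : Type) (_ : MetricSpace Y) (_ : CompactSpace Y) (g : Y → Y) (π : X → Y),
    Continuous g → Equicontinuous (fun n : ℕ => g^[n]) →
    IsFactorMap f g π → π x = π y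

/-- A null family: for each ε > 0 only finitely many members have diameter ≥ ε. -/
def NullFamily [MetricSpace X] {ι : Type*} (A : ι → Set X) : Prop :=
  ∀ ε > (0 : ℝ), {i | ε ≤ diam (A i)}.Finite

/-- Finitely Suslinean: every pairwise disjoint family of subcontinua is null. -/
def FinitelySuslinean (X : Type*) [MetricSpace X] : Prop :=
  ∀ (ι : Type) (A : ι → Set X),
    (∀ i, (A i).Nonempty ∧ IsCompact (A i) ∧ IsConnected (A i)) →
    Pairwise (Function.onFun Disjoint A) → NullFamily A

/-- Suslinean: every pairwise disjoint family of nondegenerate subcontinua is countable. -/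
def Suslinean (X : Type*) [MetricSpace X] : Prop :=
  ∀ S : Set (Set X),
    (∀ A ∈ S, IsCompact A ∧ IsConnected A ∧ A.Nontrivial) →
    S.Pairwise Disjoint → S.Countable

/-- Hereditarily locally connected: every subcontinuum is locally connected. -/
def HereditarilyLocallyConnected (X : Type*) [TopologicalSpace X] : Prop :=
  ∀ A : Set X, IsCompact A → IsConnected A → LocallyConnectedSpace A

/-- Homogeneous space: the homeomorphism group acts transitively. -/
def HomogeneousSpace (X : Type*) [TopologicalSpace X] : Prop :=
  ∀ x y : X, ∃ h : X ≃ₜ X, h x = y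

/-- Mesh of a set: supremum of diameters of its connected components. -/
noncomputable def Mesh [MetricSpace X] (B : Set X) : ℝ :=
  ⨆ x : B, diam (connectedComponentIn B (x : X))

/-- Positively continuum-wise expansive map. -/
def PosCWExpansive [MetricSpace X] (f : X → X) : Prop :=
  ∃ c > (0 : ℝ), ∀ A : Set X, IsCompact A → IsConnected A → A.Nontrivial →
    ∃ n : ℕ, c < diam (f^[n] '' A)

/-- Minimal set of a map. -/
def IsMinimalSet [TopologicalSpace X] (f : X → X) (M : Set X) : Prop :=
  IsClosed M ∧ M.Nonempty ∧ MapsTo f M M ∧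
    ∀ N ⊆ M, IsClosed N → N.Nonempty → MapsTo f N N → N = M

/-- Rotation of the circle by angle `2πα`. -/
noncomputable def circleRotation (α : ℝ) : Circle → Circle :=
  fun z => Circle.exp (2 * Real.pi * α) * z

end Defs

section Aux
open Complex

lemma monotone_preimage_preconnected {X Y : Type*} [TopologicalSpace X] [CompactSpace X]
    [TopologicalSpace Y] [T2Space Y] {π : X → Y} (hc : Continuous π)
    (hm : ∀ y : Y, IsConnected (π ⁻¹' {y}))
    {C : Set Y} (hC : IsClosed C) (hCc : IsPreconnected C) :
    IsPreconnected (π ⁻¹' C) := by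
  rw [isPreconnected_iff_subset_of_fully_disjoint_closed (hC.preimage hc)]
  intro u v hu hv hcov hdisj
  have hfib : ∀ c ∈ C, π ⁻¹' {c} ⊆ u ∨ π ⁻¹' {c} ⊆ v := by
    intro c hcC
    have h1 := (hm c).isPreconnected
    rw [isPreconnected_iff_subset_of_fully_disjoint_closed
      ((isClosed_singleton).preimage hc)] at h1
    exact h1 u v hu hv ((preimage_mono (singleton_subset_iff.2 hcC)).trans hcov) hdisj
  set Ku := π '' (u ∩ π ⁻¹' C) with hKu
  set Kv := π '' (v ∩ π ⁻¹' C) with hKv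
  have hKuc : IsClosed Ku := ((hu.inter (hC.preimage hc)).isCompact.image hc).isClosed
  have hKvc : IsClosed Kv := ((hv.inter (hC.preimage hc)).isCompact.image hc).isClosed
  have hCsub : C ⊆ Ku ∪ Kv := by
    intro c hcC
    obtain ⟨x, hx⟩ := (hm c).nonempty
    have hpx : π x = c := hx
    have hxC : x ∈ π ⁻¹' C := by simp only [Set.mem_preimage, hpx]; exact hcC
    rcases hcov hxC with h | h
    · exact Or.inl ⟨x, ⟨h, hxC⟩, hx⟩
    · exact Or.inr ⟨x, ⟨h, hxC⟩, hx⟩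
  have hdisjK : Disjoint Ku Kv := by
    rw [Set.disjoint_left]
    rintro c ⟨x, ⟨hxu, hxC⟩, rfl⟩ ⟨y, ⟨hyv, hyC⟩, hyc⟩
    rcases hfib (π x) hxC with h | h
    · exact Set.disjoint_left.1 hdisj (h hyc) hyv
    · exact Set.disjoint_left.1 hdisj hxu (h rfl)
  rcases (isPreconnected_iff_subset_of_fully_disjoint_closed hC).1 hCc Ku Kv hKuc hKvc
      hCsub hdisjK with h | h
  · left
    intro x hxC
    obtain ⟨x', ⟨hx'u, hx'C⟩, hx'⟩ := h hxC
    rcases hfib (π x) hxC with hf | hf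
    · exact hf rfl
    · exact (Set.disjoint_left.1 hdisj hx'u (hf (by simp [hx']))).elim
  · right
    intro x hxC
    obtain ⟨x', ⟨hx'v, hx'C⟩, hx'⟩ := h hxC
    rcases hfib (π x) hxC with hf | hf
    · exact (Set.disjoint_left.1 hdisj (hf (by simp [hx'])) hx'v).elim
    · exact hf rfl

section CircleLemmas

variable (s : Circle)

noncomputable def psi (z : Circle) : ℝ := Complex.arg ↑(z * s⁻¹)

noncomputable def emap (t : ℝ) : Circle := s * Circle.exp t

lemma emap_psi (z : Circle) : emap s (psi s z) = z := by
  unfold emap psi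
  have : Complex.arg ↑(z * s⁻¹) = Complex.arg (z * s⁻¹ : Circle) := rfl
  rw [this, Circle.exp_arg, mul_comm z s⁻¹, mul_inv_cancel_left]

lemma psi_emap {t : ℝ} (h1 : -Real.pi < t) (h2 : t ≤ Real.pi) : psi s (emap s t) = t := by
  unfold emap psi
  have : s * Circle.exp t * s⁻¹ = Circle.exp t := by
    rw [mul_comm s, mul_inv_cancel_right]
  rw [this]
  exact Circle.arg_exp h1 h2

lemma psi_s : psi s s = 0 := by
  unfold psi
  rw [mul_inv_cancel]
  simp

lemma emap_zero : emap s 0 = s := by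
  unfold emap; simp

lemma continuous_emap : Continuous (emap s) := continuous_const.mul Circle.exp.continuous

lemma continuousAt_psi {z : Circle} (h : psi s z ≠ Real.pi) : ContinuousAt (psi s) z := by
  have hne : ((z * s⁻¹ : Circle) : ℂ) ≠ 0 := Circle.coe_ne_zero _
  have hslit : ((z * s⁻¹ : Circle) : ℂ) ∈ Complex.slitPlane :=
    Complex.mem_slitPlane_iff_arg.2 ⟨h, hne⟩
  have hin : ContinuousAt (fun w : Circle => ((w * s⁻¹ : Circle) : ℂ)) z :=
    (continuous_subtype_val.comp (continuous_mul_right s⁻¹)).continuousAt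
  exact ContinuousAt.comp (x := z) (g := Complex.arg)
    (f := fun w : Circle => ((w * s⁻¹ : Circle) : ℂ)) (Complex.continuousAt_arg hslit) hin

lemma one_lt_pi : (1 : ℝ) < Real.pi := by linarith [Real.pi_gt_three]

end CircleLemmas

lemma exists_open_conn {X : Type*} [MetricSpace X] [CompactSpace X] [ConnectedSpace X]
    (hHLC : HereditarilyLocallyConnected X) (a : X) (r : ℝ) (hr : 0 < r) :
    ∃ U : Set X, IsOpen U ∧ IsPreconnected U ∧ a ∈ U ∧ U ⊆ ball a r := by
  haveI : LocallyConnectedSpace (univ : Set X) :=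
    hHLC univ isCompact_univ ⟨univ_nonempty, isPreconnected_univ⟩
  set B : Set (univ : Set X) := Subtype.val ⁻¹' ball a r with hB
  have hBo : IsOpen B := isOpen_ball.preimage continuous_subtype_val
  set V := connectedComponentIn B ⟨a, mem_univ a⟩ with hV
  have haB : (⟨a, mem_univ a⟩ : (univ : Set X)) ∈ B := by
    simp [hB, mem_ball_self hr]
  refine ⟨Subtype.val '' V, ?_, ?_, ?_, ?_⟩
  · exact (isOpen_univ.isOpenMap_subtype_val) V hBo.connectedComponentIn
  · exact isPreconnected_connectedComponentIn.image _ continuous_subtype_val.continuousOn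
  · exact ⟨_, mem_connectedComponentIn haB, rfl⟩
  · rintro _ ⟨w, hw, rfl⟩
    have := connectedComponentIn_subset B ⟨a, mem_univ a⟩ hw
    simpa [hB] using this

lemma compact_K {w v δ : ℕ → ℝ} (hδa : Antitone δ) (hδ0 : Tendsto δ atTop (𝓝 0))
    (hw : ∀ n, 0 ≤ w n) (hwv : ∀ n, w n ≤ v n) (hv : ∀ n, v n ≤ δ n) (hδ1 : ∀ n, δ n ≤ 1)
    (J : Set ℕ) : IsCompact (({0} : Set ℝ) ∪ ⋃ m ∈ J, Icc (w m) (v m)) := by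
  set K := ({0} : Set ℝ) ∪ ⋃ m ∈ J, Icc (w m) (v m) with hK
  have hsub : K ⊆ Icc 0 1 := by
    rintro x (hx | hx)
    · simp at hx; subst hx; exact ⟨le_refl 0, zero_le_one⟩
    · simp only [mem_iUnion] at hx
      obtain ⟨m, hm, hx⟩ := hx
      exact ⟨(hw m).trans hx.1, hx.2.trans ((hv m).trans (hδ1 m))⟩
  have hcl : IsClosed K := by
    rw [← isOpen_compl_iff]
    rw [isOpen_iff_mem_nhds]
    intro x hx
    rcases lt_trichotomy x 0 with hx0 | hx0 | hx0
    · exact Filter.mem_of_superset (Iio_mem_nhds hx0) fun y hy hyK =>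
        absurd ((hsub hyK).1) (not_le.2 hy)
    · exact absurd (Or.inl (by simp [hx0])) hx
    · obtain ⟨n, hn⟩ := (hδ0.eventually (eventually_lt_nhds hx0)).exists
      have hfin : ({m | m ∈ J ∧ m < n} : Set ℕ).Finite :=
        (finite_Iio n).subset fun m hm => hm.2
      have hclosed2 : IsClosed (⋃ m ∈ {m | m ∈ J ∧ m < n}, Icc (w m) (v m)) :=
        hfin.isClosed_biUnion fun m _ => isClosed_Icc
      have hKsub : K ⊆ Icc 0 (δ n) ∪ ⋃ m ∈ {m | m ∈ J ∧ m < n}, Icc (w m) (v m) := by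
        rintro y (hy | hy)
        · simp at hy; subst hy
          exact Or.inl ⟨le_refl 0, le_trans (hw n) ((hwv n).trans (hv n))⟩
        · simp only [mem_iUnion] at hy
          obtain ⟨m, hm, hy⟩ := hy
          by_cases hmn : m < n
          · exact Or.inr (by simp only [mem_iUnion]; exact ⟨m, ⟨hm, hmn⟩, hy⟩)
          · exact Or.inl ⟨(hw m).trans hy.1, hy.2.trans ((hv m).trans (hδa (not_lt.1 hmn)))⟩
      have : IsClosed (Icc 0 (δ n) ∪ ⋃ m ∈ {m | m ∈ J ∧ m < n}, Icc (w m) (v m)) :=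
        isClosed_Icc.union hclosed2
      refine Filter.mem_of_superset (this.isOpen_compl.mem_nhds ?_) ?_
      · intro hmem
        rcases hmem with h | h
        · exact absurd h.2 (not_le.2 hn)
        · simp only [mem_iUnion] at h
          obtain ⟨m, hm, h⟩ := h
          exact hx (Or.inr (by simp only [mem_iUnion]; exact ⟨m, hm.1, h⟩))
      · intro y hy hyK
        exact hy (hKsub hyK)
  exact isCompact_Icc.of_isClosed_subset hcl hsub

lemma my_dep_choice {α : Type*} {P : α → Prop} {R : α → α → Prop}
    (init : ∃ x, P x) (step : ∀ x, P x → ∃ y, P y ∧ R x y) :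
    ∃ g : ℕ → α, (∀ n, P (g n)) ∧ ∀ n, R (g n) (g (n + 1)) := by
  choose f hf1 hf2 using step
  obtain ⟨x0, hx0⟩ := init
  let F : {x // P x} → {x // P x} := fun p => ⟨f p.1 p.2, hf1 p.1 p.2⟩
  refine ⟨fun n => (F^[n] ⟨x0, hx0⟩).1, fun n => (F^[n] ⟨x0, hx0⟩).2, fun n => ?_⟩
  have h : F^[n + 1] ⟨x0, hx0⟩ = F (F^[n] ⟨x0, hx0⟩) := Function.iterate_succ_apply' F n _
  show R (F^[n] ⟨x0, hx0⟩).1 (F^[n+1] ⟨x0, hx0⟩).1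
  rw [h]
  exact hf2 _ _

lemma side_false {X : Type*} [MetricSpace X] [CompactSpace X] [ConnectedSpace X]
    (hHLC : HereditarilyLocallyConnected X)
    (π : X → Circle) (hc : Continuous π)
    (hm : ∀ y : Circle, IsConnected (π ⁻¹' {y}))
    (s : Circle) {a b : X} (hab : a ≠ b)
    (ha : ∀ δ : ℝ, 0 < δ → δ ≤ 1 →
      a ∈ closure (π ⁻¹' {z : Circle | psi s z ∈ Ioo 0 δ}))
    (hb : ∀ δ : ℝ, 0 < δ → δ ≤ 1 →
      b ∈ closure (π ⁻¹' {z : Circle | psi s z ∈ Ioo 0 δ})) :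
    False := by
  have hπ3 := Real.pi_gt_three
  set d := dist a b with hd
  have hd0 : 0 < d := dist_pos.2 hab
  set c := d / 100 with hcdef
  have hc0 : 0 < c := by positivity
  obtain ⟨U, hUo, hUc, haU, hUb⟩ := exists_open_conn hHLC a c hc0
  obtain ⟨W, hWo, hWc, hbW, hWb⟩ := exists_open_conn hHLC b c hc0
  set Good : ℝ × ℝ × ℝ × X × X → Prop := fun q =>
    0 < q.1 ∧ q.1 ≤ 1 ∧ q.2.1 ∈ Ioo 0 q.1 ∧ q.2.2.1 ∈ Ioo 0 q.1 ∧
      q.2.2.2.1 ∈ U ∧ q.2.2.2.2 ∈ W ∧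
      π q.2.2.2.1 = emap s q.2.1 ∧ π q.2.2.2.2 = emap s q.2.2.1 with hGood
  have step : ∀ δ : ℝ, 0 < δ → δ ≤ 1 → ∃ q, Good q ∧ q.1 = δ := by
    intro δ h1 h2
    have h3 := ha δ h1 h2
    have h4 := hb δ h1 h2
    rw [_root_.mem_closure_iff] at h3 h4
    obtain ⟨x', hx'U, hx'A⟩ := h3 U hUo haU
    obtain ⟨y', hy'W, hy'A⟩ := h4 W hWo hbW
    exact ⟨⟨δ, psi s (π x'), psi s (π y'), x', y'⟩,
      ⟨h1, h2, hx'A, hy'A, hx'U, hy'W, (emap_psi s (π x')).symm, (emap_psi s (π y')).symm⟩, rfl⟩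
  obtain ⟨q0, hq0⟩ := step 1 one_pos le_rfl
  obtain ⟨g, hg, hgR⟩ := my_dep_choice (R := fun q q' : ℝ × ℝ × ℝ × X × X =>
      q'.1 = min (min q.2.1 q.2.2.1 / 2) (q.1 / 2)) ⟨q0, hq0.1⟩ (by
    intro q hq
    have ht := hq.2.2.1
    have hu := hq.2.2.2.1
    have hmin : 0 < min q.2.1 q.2.2.1 := lt_min ht.1 hu.1
    have h1 : 0 < min (min q.2.1 q.2.2.1 / 2) (q.1 / 2) :=
      lt_min (by linarith) (by linarith [hq.1])
    have h2 : min (min q.2.1 q.2.2.1 / 2) (q.1 / 2) ≤ 1 :=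
      (min_le_right _ _).trans (by linarith [hq.2.1])
    obtain ⟨q', h3, h4⟩ := step _ h1 h2
    exact ⟨q', h3, h4⟩)
  set δs : ℕ → ℝ := fun n => (g n).1 with hδs
  set ts : ℕ → ℝ := fun n => (g n).2.1 with hts
  set us : ℕ → ℝ := fun n => (g n).2.2.1 with hus
  set xs : ℕ → X := fun n => (g n).2.2.2.1 with hxs
  set ys : ℕ → X := fun n => (g n).2.2.2.2 with hys
  have hδpos : ∀ n, 0 < δs n := fun n => (hg n).1
  have hδ1 : ∀ n, δs n ≤ 1 := fun n => (hg n).2.1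
  have htI : ∀ n, ts n ∈ Ioo 0 (δs n) := fun n => (hg n).2.2.1
  have huI : ∀ n, us n ∈ Ioo 0 (δs n) := fun n => (hg n).2.2.2.1
  have hxU : ∀ n, xs n ∈ U := fun n => (hg n).2.2.2.2.1
  have hyW : ∀ n, ys n ∈ W := fun n => (hg n).2.2.2.2.2.1
  have hπx : ∀ n, π (xs n) = emap s (ts n) := fun n => (hg n).2.2.2.2.2.2.1
  have hπy : ∀ n, π (ys n) = emap s (us n) := fun n => (hg n).2.2.2.2.2.2.2
  have hsucc : ∀ n, δs (n + 1) = min (min (ts n) (us n) / 2) (δs n / 2) := fun n => hgR n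
  set ws : ℕ → ℝ := fun n => min (ts n) (us n) with hws
  set vs : ℕ → ℝ := fun n => max (ts n) (us n) with hvs
  have hw0 : ∀ n, 0 < ws n := fun n => lt_min (htI n).1 (huI n).1
  have hwv : ∀ n, ws n ≤ vs n := fun n => min_le_max
  have hvδ : ∀ n, vs n ≤ δs n := fun n => max_le (htI n).2.le (huI n).2.le
  have hδhalf : ∀ n, δs (n + 1) ≤ δs n / 2 := fun n => (hsucc n).le.trans (min_le_right _ _)
  have hδw : ∀ n, δs (n + 1) < ws n := fun n =>
    lt_of_le_of_lt ((hsucc n).le.trans (min_le_left _ _)) (half_lt_self (hw0 n))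
  have hδanti : Antitone δs := antitone_nat_of_succ_le fun n =>
    (hδhalf n).trans (by linarith [hδpos n])
  have hδbound : ∀ n, δs n ≤ (1 / 2 : ℝ) ^ n := by
    intro n
    induction n with
    | zero => simpa using hδ1 0
    | succ n ih =>
      calc δs (n + 1) ≤ δs n / 2 := hδhalf n
        _ ≤ (1 / 2 : ℝ) ^ n / 2 := by linarith
        _ = (1 / 2 : ℝ) ^ (n + 1) := by ring
  have hδ0 : Tendsto δs atTop (𝓝 0) :=
    squeeze_zero (fun n => (hδpos n).le) hδbound
      (tendsto_pow_atTop_nhds_zero_of_lt_one (by norm_num) (by norm_num))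
  set A : ℕ → Set Circle := fun n => emap s '' Icc (ws n) (vs n) with hA
  set Q : ℕ → Set X := fun n => π ⁻¹' A n with hQ
  have hψA : ∀ n, ∀ ζ ∈ A n, psi s ζ ∈ Icc (ws n) (vs n) ∧ ζ = emap s (psi s ζ) := by
    rintro n ζ ⟨r, hr, rfl⟩
    have hrπ : psi s (emap s r) = r := psi_emap s
      (by nlinarith [hw0 n, hr.1]) (by nlinarith [hr.2, hvδ n, hδ1 n])
    rw [hrπ]
    exact ⟨hr, rfl⟩
  have hvlt : ∀ m n, n < m → vs m < ws n := by
    intro m n hnm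
    calc vs m ≤ δs m := hvδ m
      _ ≤ δs (n + 1) := hδanti hnm
      _ < ws n := hδw n
  have hQdisj : ∀ m n, m ≠ n → ∀ p, p ∈ Q m → p ∉ Q n := by
    intro m n hmn p hpm hpn
    obtain ⟨h1, -⟩ := hψA m (π p) hpm
    obtain ⟨h2, -⟩ := hψA n (π p) hpn
    rcases hmn.lt_or_gt with h | h
    · exact absurd (h2.2.trans_lt (hvlt n m h)) (not_lt.2 h1.1)
    · exact absurd (h1.2.trans_lt (hvlt m n h)) (not_lt.2 h2.1)
  have hψs0 : psi s s = 0 := psi_s s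
  have hQF : ∀ n, ∀ p ∈ Q n, π p ≠ s := by
    intro n p hp hps
    obtain ⟨h1, -⟩ := hψA n (π p) hp
    rw [hps, hψs0] at h1
    exact absurd h1.1 (not_le.2 (hw0 n))
  have hAcomp : ∀ n, IsCompact (A n) := fun n => isCompact_Icc.image (continuous_emap s)
  have hQclosed : ∀ n, IsClosed (Q n) := fun n => ((hAcomp n).isClosed).preimage hc
  have hQcomp : ∀ n, IsCompact (Q n) := fun n => (hQclosed n).isCompact
  have hQconn : ∀ n, IsPreconnected (Q n) := fun n =>
    monotone_preimage_preconnected hc hm (hAcomp n).isClosed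
      (isPreconnected_Icc.image _ (continuous_emap s).continuousOn)
  have hxQ : ∀ n, xs n ∈ Q n := by
    intro n
    show π (xs n) ∈ A n
    rw [hπx n]
    exact ⟨ts n, ⟨min_le_left _ _, le_max_left _ _⟩, rfl⟩
  have hyQ : ∀ n, ys n ∈ Q n := by
    intro n
    show π (ys n) ∈ A n
    rw [hπy n]
    exact ⟨us n, ⟨min_le_right _ _, le_max_right _ _⟩, rfl⟩
  have hxa : ∀ n, dist (xs n) a < c := fun n => mem_ball.1 (hUb (hxU n))
  have hyb : ∀ n, dist (ys n) b < c := fun n => mem_ball.1 (hWb (hyW n))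
  -- far points
  have hzex : ∀ n, ∃ z ∈ Q n, d / 8 ≤ dist z a ∧ d / 8 ≤ dist z b := by
    intro n
    by_contra hcon
    push_neg at hcon
    have hcov : Q n ⊆ ball a (d / 8) ∪ ball b (d / 8) := by
      intro p hp
      rcases lt_or_ge (dist p a) (d / 8) with h | h
      · exact Or.inl (mem_ball.2 h)
      · exact Or.inr (mem_ball.2 (hcon p hp h))
    obtain ⟨p, -, hp1, hp2⟩ := hQconn n (ball a (d / 8)) (ball b (d / 8)) isOpen_ball
      isOpen_ball hcov
      ⟨xs n, hxQ n, mem_ball.2 (by rw [hcdef] at hxa; linarith [hxa n])⟩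
      ⟨ys n, hyQ n, mem_ball.2 (by rw [hcdef] at hyb; linarith [hyb n])⟩
    rw [mem_ball] at hp1 hp2
    have htri := dist_triangle a p b
    rw [dist_comm a p] at htri
    linarith
  choose z hz1 hz2 hz3 using hzex
  obtain ⟨zz, -, φ, hφ, hzz⟩ := isCompact_univ.tendsto_subseq (fun n => (mem_univ (z n)))
  have hrmem : ∀ n, psi s (π (z n)) ∈ Icc (ws n) (vs n) := fun n => (hψA n (π (z n)) (hz1 n)).1
  have hreq : ∀ n, π (z n) = emap s (psi s (π (z n))) := fun n => (hψA n (π (z n)) (hz1 n)).2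
  have hr0 : Tendsto (fun k => psi s (π (z (φ k)))) atTop (𝓝 0) := by
    apply squeeze_zero (fun k => ((hw0 (φ k)).trans_le (hrmem (φ k)).1).le)
      (g := fun k => (1 / 2 : ℝ) ^ k)
    · intro k
      calc psi s (π (z (φ k))) ≤ vs (φ k) := (hrmem (φ k)).2
        _ ≤ δs (φ k) := hvδ _
        _ ≤ (1 / 2 : ℝ) ^ (φ k) := hδbound _
        _ ≤ (1 / 2 : ℝ) ^ k := pow_le_pow_of_le_one (by norm_num) (by norm_num) (hφ.le_apply)
    · exact tendsto_pow_atTop_nhds_zero_of_lt_one (by norm_num) (by norm_num)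
  have hπzz : π zz = s := by
    have h1 : Tendsto (fun k => π (z (φ k))) atTop (𝓝 (π zz)) := (hc.tendsto zz).comp hzz
    have h2 : Tendsto (fun k => π (z (φ k))) atTop (𝓝 s) := by
      have h3 : Tendsto (fun k => emap s (psi s (π (z (φ k))))) atTop (𝓝 (emap s 0)) :=
        ((continuous_emap s).tendsto 0).comp hr0
      rw [emap_zero] at h3
      exact h3.congr fun k => (hreq (φ k)).symm
    exact tendsto_nhds_unique h1 h2
  have hzza : d / 8 ≤ dist zz a :=
    ge_of_tendsto' (hzz.dist (tendsto_const_nhds (x := a))) (fun k => hz2 (φ k))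
  have hzzb : d / 8 ≤ dist zz b :=
    ge_of_tendsto' (hzz.dist (tendsto_const_nhds (x := b))) (fun k => hz3 (φ k))
  -- the continuum M
  set QU : Set X := ⋃ n, Q n with hQU
  set M : Set X := closure U ∪ (closure QU ∪ closure W) with hM
  have hMclosed : IsClosed M := isClosed_closure.union (isClosed_closure.union isClosed_closure)
  have hMcomp : IsCompact M := hMclosed.isCompact
  have hPconn : IsPreconnected (⋃ n, (closure U ∪ (Q n ∪ closure W))) := by
    apply isPreconnected_iUnion
    · exact ⟨a, mem_iInter.2 fun n => Or.inl (subset_closure haU)⟩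
    · intro n
      have h1 : IsPreconnected (Q n ∪ closure W) :=
        IsPreconnected.union (ys n) (hyQ n) (subset_closure (hyW n)) (hQconn n) hWc.closure
      exact IsPreconnected.union (xs n) (subset_closure (hxU n)) (Or.inl (hxQ n))
        hUc.closure h1
  have hPeq : (⋃ n, (closure U ∪ (Q n ∪ closure W))) = closure U ∪ (QU ∪ closure W) := by
    rw [hQU, ← Set.union_iUnion (closure U) (fun n => Q n ∪ closure W),
      ← Set.iUnion_union (closure W) Q]
  have hMeq : M = closure (⋃ n, (closure U ∪ (Q n ∪ closure W))) := by
    rw [hPeq, closure_union, closure_union, closure_closure, closure_closure]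
  have hMpre : IsPreconnected M := hMeq ▸ hPconn.closure
  have haM : a ∈ M := Or.inl (subset_closure haU)
  haveI hMlc : LocallyConnectedSpace ↥M := hHLC M hMcomp ⟨⟨a, haM⟩, hMpre⟩
  -- closedness of fiber-with-channels sets
  have hGclosed : ∀ J : Set ℕ, IsClosed (π ⁻¹' {s} ∪ ⋃ m ∈ J, Q m) := by
    intro J
    have hK := compact_K (w := ws) (v := vs) (δ := δs) hδanti hδ0
      (fun n => (hw0 n).le) hwv hvδ hδ1 J
    have heq : π ⁻¹' {s} ∪ ⋃ m ∈ J, Q m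
        = π ⁻¹' (emap s '' (({0} : Set ℝ) ∪ ⋃ m ∈ J, Icc (ws m) (vs m))) := by
      rw [image_union, image_singleton, emap_zero, preimage_union]
      congr 1
      rw [image_iUnion₂, preimage_iUnion₂]
    rw [heq]
    exact ((hK.image (continuous_emap s)).isClosed).preimage hc
  have hclQU : closure QU ⊆ π ⁻¹' {s} ∪ QU := by
    have h1 : QU ⊆ π ⁻¹' {s} ∪ ⋃ m ∈ (univ : Set ℕ), Q m := by
      rw [Set.biUnion_univ]
      exact subset_union_right
    have := closure_minimal h1 (hGclosed univ)
    rwa [Set.biUnion_univ] at this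
  have hzzQU : zz ∈ closure QU :=
    mem_closure_of_tendsto hzz (Eventually.of_forall fun k => mem_iUnion.2 ⟨φ k, hz1 (φ k)⟩)
  have hzzM : zz ∈ M := Or.inr (Or.inl hzzQU)
  -- connected neighborhood of zz in M
  set pt : ↥M := ⟨zz, hzzM⟩ with hpt
  set B' : Set ↥M := Subtype.val ⁻¹' ball zz c with hB'
  have hB'o : IsOpen B' := isOpen_ball.preimage continuous_subtype_val
  have hptB : pt ∈ B' := mem_ball_self hc0
  set V' : Set ↥M := connectedComponentIn B' pt with hV'
  have hV'o : IsOpen V' := hB'o.connectedComponentIn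
  have hptV' : pt ∈ V' := mem_connectedComponentIn hptB
  set V : Set X := Subtype.val '' V' with hV
  have hVpre : IsPreconnected V :=
    isPreconnected_connectedComponentIn.image _ continuous_subtype_val.continuousOn
  have hzzV : zz ∈ V := ⟨pt, hptV', rfl⟩
  have hVM : ∀ p ∈ V, p ∈ M ∧ p ∈ ball zz c := by
    rintro p ⟨w, hw, rfl⟩
    have h5 : w ∈ B' := connectedComponentIn_subset B' pt hw
    exact ⟨w.2, h5⟩
  -- find a channel point in V
  have hmemM : ∀ k, z (φ k) ∈ M := fun k =>
    Or.inr (Or.inl (subset_closure (mem_iUnion.2 ⟨φ k, hz1 (φ k)⟩)))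
  have htend : Tendsto (fun k => (⟨z (φ k), hmemM k⟩ : ↥M)) atTop (𝓝 pt) := by
    rw [tendsto_subtype_rng]
    exact hzz
  obtain ⟨k, hk⟩ := (htend.eventually (hV'o.mem_nhds hptV')).exists
  set n0 : ℕ := φ k with hn0
  have hzkV : z n0 ∈ V := ⟨⟨z (φ k), hmemM k⟩, hk, rfl⟩
  have hzkQ : z n0 ∈ Q n0 := hz1 n0
  -- separation
  set R : Set X := π ⁻¹' {s} ∪ ⋃ m ∈ {m : ℕ | m ≠ n0}, Q m with hR
  have hRclosed : IsClosed R := hGclosed _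
  have hdisjQR : Disjoint (Q n0) R := by
    rw [Set.disjoint_left]
    intro p hp hpR
    rcases hpR with hpF | hpQ
    · exact hQF n0 p hp hpF
    · simp only [mem_iUnion] at hpQ
      obtain ⟨m, hm, hpm⟩ := hpQ
      exact hQdisj m n0 hm p hpm hp
  obtain ⟨O1, O2, hO1, hO2, hQO1, hRO2, hOdisj⟩ :=
    SeparatedNhds.of_isCompact_isClosed (hQcomp n0) hRclosed hdisjQR
  have hVsub : V ⊆ O1 ∪ O2 := by
    intro p hp
    obtain ⟨hpM, hpball⟩ := hVM p hp
    have hfar : ∀ q : X, dist p q ≤ c → d / 8 ≤ dist zz q → False := by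
      intro q h1 h2
      have h3 := dist_triangle zz p q
      rw [mem_ball] at hpball
      rw [dist_comm zz p] at h3
      linarith
    rcases hpM with hpU | hpQW
    · exfalso
      have h4 : p ∈ closedBall a c := closure_ball_subset_closedBall (closure_mono hUb hpU)
      exact hfar a (mem_closedBall.1 h4) hzza
    rcases hpQW with hpQ | hpW
    · rcases hclQU hpQ with hpF | hpQ'
      · exact Or.inr (hRO2 (Or.inl hpF))
      · obtain ⟨m, hpm⟩ := mem_iUnion.1 hpQ'
        by_cases hmn : m = n0
        · exact Or.inl (hQO1 (hmn ▸ hpm))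
        · exact Or.inr (hRO2 (Or.inr (mem_iUnion.2 ⟨m, mem_iUnion.2 ⟨hmn, hpm⟩⟩)))
    · exfalso
      have h4 : p ∈ closedBall b c := closure_ball_subset_closedBall (closure_mono hWb hpW)
      exact hfar b (mem_closedBall.1 h4) hzzb
  have hzzO2 : zz ∈ O2 := hRO2 (Or.inl (by simp [hπzz]))
  have hzkO1 : z n0 ∈ O1 := hQO1 hzkQ
  obtain ⟨p, -, hp1, hp2⟩ := hVpre O1 O2 hO1 hO2 hVsub ⟨z n0, hzkV, hzkO1⟩ ⟨zz, hzzV, hzzO2⟩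
  exact Set.disjoint_left.1 hOdisj hp1 hp2


end Aux

/-- a monotone continuous surjection with nowhere dense fibers from a
hereditarily locally connected continuum onto the circle is a homeomorphism. -/
theorem stmt7 {X : Type*} [MetricSpace X] [CompactSpace X] [ConnectedSpace X]
    (hHLC : HereditarilyLocallyConnected X)
    (π : X → Circle) (hc : Continuous π) (hs : Function.Surjective π)
    (hm : MonotoneFibers π)
    (hint : ∀ s : Circle, interior (π ⁻¹' {s}) = ∅) :
    ∃ h : X ≃ₜ Circle, ⇑h = π := by
  have hπ3 := Real.pi_gt_three
  have hinj : Function.Injective π := by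
    intro x y hxy
    by_contra hne
    set s : Circle := π y with hsdef
    have hxF : x ∈ π ⁻¹' {s} := by simp [hxy]
    have hyF : y ∈ π ⁻¹' {s} := by simp [hsdef]
    set F : Set X := π ⁻¹' {s} with hF
    -- each point of a fiber is a limit from one of the two sides
    have hδpos : ∀ n : ℕ, (0 : ℝ) < 1 / (n + 1 : ℝ) := fun n => by positivity
    have hδle1 : ∀ n : ℕ, (1 : ℝ) / (n + 1) ≤ 1 := fun n => by
      rw [div_le_one (by positivity)]
      exact le_add_of_nonneg_left (Nat.cast_nonneg n)
    have hside : ∀ p ∈ F, ∀ n : ℕ,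
        p ∈ closure (π ⁻¹' {z : Circle | psi s z ∈ Ioo (-(1 / (n + 1 : ℝ))) 0}) ∪
          closure (π ⁻¹' {z : Circle | psi s z ∈ Ioo 0 (1 / (n + 1 : ℝ))}) := by
      intro p hp n
      set δ : ℝ := 1 / (n + 1 : ℝ) with hδ
      have hδ0 : 0 < δ := hδpos n
      have hδ1 : δ ≤ 1 := hδle1 n
      have hNopen : IsOpen (π ⁻¹' {z : Circle | psi s z ∈ Ioo (-δ) δ}) := by
        rw [isOpen_iff_mem_nhds]
        intro q hq
        have h1 : psi s (π q) ∈ Ioo (-δ) δ := hq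
        have h2 : psi s (π q) ≠ Real.pi := by
          intro h
          rw [h] at h1
          linarith [h1.2]
        have h3 : ContinuousAt (fun w : X => psi s (π w)) q :=
          (continuousAt_psi s h2).comp hc.continuousAt
        exact h3.preimage_mem_nhds (isOpen_Ioo.mem_nhds h1)
      rw [← closure_union]
      rw [_root_.mem_closure_iff]
      intro O hOo hpO
      have hπp : π p = s := hp
      have hpN : p ∈ O ∩ π ⁻¹' {z : Circle | psi s z ∈ Ioo (-δ) δ} := by
        refine ⟨hpO, ?_⟩
        show psi s (π p) ∈ Ioo (-δ) δ
        rw [hπp, psi_s]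
        exact ⟨by linarith, hδ0⟩
      have hdense : Dense Fᶜ := interior_eq_empty_iff_dense_compl.1 (hint s)
      obtain ⟨q, hq⟩ := hdense.inter_open_nonempty _ (hOo.inter hNopen) ⟨p, hpN⟩
      refine ⟨q, hq.1.1, ?_⟩
      have h5 : psi s (π q) ∈ Ioo (-δ) δ := hq.1.2
      have h6 : psi s (π q) ≠ 0 := by
        intro h0
        have h7 : π q = emap s (psi s (π q)) := (emap_psi s (π q)).symm
        rw [h0, emap_zero] at h7
        exact hq.2 (show q ∈ F by simp [hF, h7])
      rcases h6.lt_or_gt with h | h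
      · exact Or.inl (show psi s (π q) ∈ Ioo (-δ) 0 from ⟨h5.1, h⟩)
      · exact Or.inr (show psi s (π q) ∈ Ioo 0 δ from ⟨h, h5.2⟩)
    set Fm : Set X := ⋂ n : ℕ, closure (π ⁻¹' {z : Circle | psi s z ∈ Ioo (-(1 / (n + 1 : ℝ))) 0})
      with hFm
    set Fp : Set X := ⋂ n : ℕ, closure (π ⁻¹' {z : Circle | psi s z ∈ Ioo 0 (1 / (n + 1 : ℝ))})
      with hFp
    have hmonoP : ∀ m n : ℕ, n ≤ m →
        closure (π ⁻¹' {z : Circle | psi s z ∈ Ioo 0 (1 / (m + 1 : ℝ))}) ⊆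
          closure (π ⁻¹' {z : Circle | psi s z ∈ Ioo 0 (1 / (n + 1 : ℝ))}) := by
      intro m n hnm
      apply closure_mono
      apply preimage_mono
      intro ζ hζ
      exact ⟨hζ.1, hζ.2.trans_le (by
        apply one_div_le_one_div_of_le (by positivity)
        exact_mod_cast Nat.add_le_add_right hnm 1)⟩
    have hmonoM : ∀ m n : ℕ, n ≤ m →
        closure (π ⁻¹' {z : Circle | psi s z ∈ Ioo (-(1 / (m + 1 : ℝ))) 0}) ⊆
          closure (π ⁻¹' {z : Circle | psi s z ∈ Ioo (-(1 / (n + 1 : ℝ))) 0}) := by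
      intro m n hnm
      apply closure_mono
      apply preimage_mono
      intro ζ hζ
      refine ⟨lt_of_le_of_lt ?_ hζ.1, hζ.2⟩
      apply neg_le_neg
      apply one_div_le_one_div_of_le (by positivity)
      exact_mod_cast Nat.add_le_add_right hnm 1
    have hmemFpm : ∀ p ∈ F, p ∈ Fm ∪ Fp := by
      intro p hp
      by_cases hall : ∀ n : ℕ, p ∈ closure (π ⁻¹' {z : Circle | psi s z ∈ Ioo 0 (1 / (n + 1 : ℝ))})
      · exact Or.inr (mem_iInter.2 hall)
      · push_neg at hall
        obtain ⟨n₀, hn₀⟩ := hall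
        left
        apply mem_iInter.2
        intro n
        rcases hside p hp (max n n₀) with h | h
        · exact hmonoM (max n n₀) n (le_max_left _ _) h
        · exact absurd (hmonoP (max n n₀) n₀ (le_max_right _ _) h) hn₀
    -- case analysis
    by_cases hsub1 : Set.Subsingleton Fp
    · by_cases hsub2 : Set.Subsingleton Fm
      · -- both degenerate: the fiber has exactly two points, contradicting connectedness
        have hpair : F ⊆ {x, y} := by
          rcases hmemFpm x hxF with hxm | hxp
          · rcases hmemFpm y hyF with hym | hyp
            · exact absurd (hsub2 hxm hym) hne
            · intro p hp
              rcases hmemFpm p hp with h | h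
              · exact Or.inl (hsub2 h hxm)
              · exact Or.inr (hsub1 h hyp)
          · rcases hmemFpm y hyF with hym | hyp
            · intro p hp
              rcases hmemFpm p hp with h | h
              · exact Or.inr (hsub2 h hym)
              · exact Or.inl (hsub1 h hxp)
            · exact absurd (hsub1 hxp hyp) hne
        have hd0 : 0 < dist x y := dist_pos.2 hne
        have hconn := (hm s).isPreconnected
        obtain ⟨p, -, hp1, hp2⟩ := hconn (ball x (dist x y / 2)) (ball y (dist x y / 2))
          isOpen_ball isOpen_ball
          (by
            intro p hp
            rcases hpair hp with h | h
            · rw [h]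
              exact Or.inl (mem_ball_self (by linarith))
            · rw [mem_singleton_iff] at h
              rw [h]
              exact Or.inr (mem_ball_self (by linarith)))
          ⟨x, hxF, mem_ball_self (by linarith)⟩ ⟨y, hyF, mem_ball_self (by linarith)⟩
        rw [mem_ball] at hp1 hp2
        have := dist_triangle x p y
        rw [dist_comm x p] at this
        linarith
      · -- Fm nondegenerate: use the reflected map
        rw [Set.not_subsingleton_iff] at hsub2
        obtain ⟨a, haFm, b, hbFm, hab⟩ := hsub2
        set π' : X → Circle := fun q => s * s * (π q)⁻¹ with hπ'
        have minv : ∀ w : Circle, s * s * (s * s * w⁻¹)⁻¹ = w := by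
          intro w
          apply Subtype.ext
          have hs0 : (s : ℂ) ≠ 0 := Circle.coe_ne_zero s
          have hw0 : ((w : Circle) : ℂ) ≠ 0 := Circle.coe_ne_zero _
          push_cast
          field_simp
        have hc' : Continuous π' := continuous_const.mul hc.inv
        have hm' : ∀ ζ : Circle, IsConnected (π' ⁻¹' {ζ}) := by
          intro ζ
          have heq : π' ⁻¹' {ζ} = π ⁻¹' {s * s * ζ⁻¹} := by
            ext q
            simp only [mem_preimage, mem_singleton_iff, hπ']
            constructor
            · intro h
              rw [← h, minv]
            · intro h
              rw [h, minv]
          rw [heq]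
          exact hm _
        have hkey : ∀ δ : ℝ, 0 < δ → δ ≤ 1 →
            π' ⁻¹' {z : Circle | psi s z ∈ Ioo 0 δ} =
              π ⁻¹' {z : Circle | psi s z ∈ Ioo (-δ) 0} := by
          intro δ hδ0 hδ1
          ext q
          simp only [mem_preimage, mem_setOf_eq]
          have h1 : (π' q * s⁻¹ : Circle) = (π q * s⁻¹)⁻¹ := by
            show (s * s * (π q)⁻¹) * s⁻¹ = (π q * s⁻¹)⁻¹
            apply Subtype.ext
            have hs0 : (s : ℂ) ≠ 0 := Circle.coe_ne_zero s
            have hq0 : ((π q : Circle) : ℂ) ≠ 0 := Circle.coe_ne_zero _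
            push_cast
            field_simp
          have h2 : psi s (π' q) = Complex.arg (((π q * s⁻¹ : Circle) : ℂ)⁻¹) := by
            unfold psi
            rw [h1, Circle.coe_inv]
          rw [h2, Complex.arg_inv]
          by_cases h3 : Complex.arg ((π q * s⁻¹ : Circle) : ℂ) = Real.pi
          · rw [if_pos h3]
            unfold psi
            rw [h3]
            constructor
            · intro h4
              linarith [h4.2]
            · intro h4
              linarith [h4.2]
          · rw [if_neg h3]
            unfold psi
            constructor
            · intro h4
              exact ⟨by linarith [h4.2], by linarith [h4.1]⟩
            · intro h4
              exact ⟨by linarith [h4.2], by linarith [h4.1]⟩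
        have htrans : ∀ p : X, p ∈ Fm → ∀ δ : ℝ, 0 < δ → δ ≤ 1 →
            p ∈ closure (π' ⁻¹' {z : Circle | psi s z ∈ Ioo 0 δ}) := by
          intro p hp δ hδ0 hδ1
          rw [hkey δ hδ0 hδ1]
          obtain ⟨n, hn⟩ := exists_nat_one_div_lt hδ0
          have h5 : p ∈ closure (π ⁻¹' {z : Circle | psi s z ∈ Ioo (-(1 / (n + 1 : ℝ))) 0}) :=
            mem_iInter.1 hp n
          refine closure_mono (preimage_mono ?_) h5
          intro ζ hζ
          exact ⟨lt_of_le_of_lt (by linarith) hζ.1, hζ.2⟩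
        exact side_false hHLC π' hc' hm' s hab
          (htrans a haFm) (htrans b hbFm)
    · -- Fp nondegenerate: use π directly
      rw [Set.not_subsingleton_iff] at hsub1
      obtain ⟨a, haFp, b, hbFp, hab⟩ := hsub1
      have htrans : ∀ p : X, p ∈ Fp → ∀ δ : ℝ, 0 < δ → δ ≤ 1 →
          p ∈ closure (π ⁻¹' {z : Circle | psi s z ∈ Ioo 0 δ}) := by
        intro p hp δ hδ0 hδ1
        obtain ⟨n, hn⟩ := exists_nat_one_div_lt hδ0
        have h5 : p ∈ closure (π ⁻¹' {z : Circle | psi s z ∈ Ioo 0 (1 / (n + 1 : ℝ))}) :=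
          mem_iInter.1 hp n
        refine closure_mono (preimage_mono ?_) h5
        intro ζ hζ
        exact ⟨hζ.1, by linarith [hζ.2]⟩
      exact side_false hHLC π hc hm s hab (htrans a haFp) (htrans b hbFp)
  exact ⟨Continuous.homeoOfEquivCompactToT2 (f := Equiv.ofBijective π ⟨hinj, hs⟩) hc, rfl⟩
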